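/- For all positive integers Δ and k there is a constant c > 0 such that if a graph of (k, Δ)-almost bounded degree has a path of order n, then it has an induced path of order at least c·log₂ n. -/

import Mathlib

open SimpleGraph Real

/-- `G` has a (not necessarily induced) path on `n` vertices. -/
def HasPathOfOrder {V : Type*} (G : SimpleGraph V) (n : ℕ) : Prop :=
  ∃ (u v : V) (p : G.Walk u v), p.IsPath ∧ p.length + 1 = n

/-- `G` has a Hamiltonian path. -/
def HasHamPath {V : Type*} (G : SimpleGraph V) : Prop :=
  ∃ (u v : V) (p : G.Walk u v), p.IsPath ∧ ∀ w, w ∈ p.support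

/-- `G` has an induced path on at least `r` vertices (an induced subgraph isomorphic to a
path graph on `m ≥ r` vertices). -/
def HasInducedPathGE {V : Type*} (G : SimpleGraph V) (r : ℝ) : Prop :=
  ∃ m : ℕ, r ≤ (m : ℝ) ∧ Nonempty (pathGraph m ↪g G)

/-- A tree (or path) representation of `G` over the graph `T`: every vertex `v` of `G` has a
nonempty connected model `model v ⊆ V(T)`, and models of adjacent vertices intersect. -/
structure TreeRep {V N : Type*} (G : SimpleGraph V) (T : SimpleGraph N) where
  model : V → Set N
  model_connected : ∀ v, (T.induce (model v)).Connected
  adj_meet : ∀ ⦃u v⦄, G.Adj u v → (model u ∩ model v).Nonempty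

namespace TreeRep

variable {V N : Type*} {G : SimpleGraph V} {T : SimpleGraph N}

/-- The bag of the representation at a node `t`. -/
def bag (R : TreeRep G T) (t : N) : Set V := {v | t ∈ R.model v}

/-- The representation has width less than `k`, i.e. all bags have at most `k` vertices. -/
def WidthLT (R : TreeRep G T) (k : ℕ) : Prop := ∀ t, (R.bag t).ncard ≤ k

/-- The representation has width at most `k`, i.e. all bags have at most `k + 1` vertices. -/
def WidthLE (R : TreeRep G T) (k : ℕ) : Prop := ∀ t, (R.bag t).ncard ≤ k + 1

/-- The weight of a path `p` of `T`: the number of vertices of `G` whose model meets `p`. -/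
noncomputable def pathWeight (R : TreeRep G T) {x y : N} (p : T.Walk x y) : ℕ :=
  {v : V | ∃ t ∈ p.support, t ∈ R.model v}.ncard

/-- A representation is varied if no bag is contained in the bag at a neighboring node. -/
def Varied (R : TreeRep G T) : Prop := ∀ ⦃t t'⦄, T.Adj t t' → ¬ R.bag t ⊆ R.bag t'

/-- The representation has adhesion less than `a`: the adhesion set of every edge of `T`
has fewer than `a` vertices. -/
def AdhesionLT (R : TreeRep G T) (a : ℕ) : Prop :=
  ∀ ⦃t t'⦄, T.Adj t t' → (R.bag t ∩ R.bag t').ncard < a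

/-- The torso of the representation at a node `t`: the subgraph induced on the bag at `t`
together with all edges inside adhesion sets of edges of `T` incident to `t`. -/
def torso (R : TreeRep G T) (t : N) : SimpleGraph (R.bag t) :=
  SimpleGraph.fromRel (fun u v =>
    G.Adj u v ∨ ∃ t', T.Adj t t' ∧ (u : V) ∈ R.bag t' ∧ (v : V) ∈ R.bag t')

end TreeRep

/-- `G` has pathwidth less than `k`: it has a representation over a path all of whose bags
have at most `k` vertices. -/
def PathwidthLT {V : Type*} (G : SimpleGraph V) (k : ℕ) : Prop :=
  ∃ (m : ℕ) (R : TreeRep G (pathGraph (m + 1))), R.WidthLT k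

/-- `G` has treewidth less than `k`: it has a representation over a tree all of whose bags
have at most `k` vertices. -/
def TreewidthLT {V : Type*} (G : SimpleGraph V) (k : ℕ) : Prop :=
  ∃ (N : Type) (_ : Fintype N) (T : SimpleGraph N), T.IsTree ∧
    ∃ R : TreeRep G T, R.WidthLT k

/-- `G` has treewidth at most `k`. -/
def TreewidthLE {V : Type*} (G : SimpleGraph V) (k : ℕ) : Prop :=
  ∃ (N : Type) (_ : Fintype N) (T : SimpleGraph N), T.IsTree ∧
    ∃ R : TreeRep G T, R.WidthLE k

/-- A leaf of a graph: a vertex with at most one neighbor. -/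
def IsLeafNode {N : Type*} (T : SimpleGraph N) (l : N) : Prop :=
  (T.neighborSet l).Subsingleton

/-- `H` is obtained from `G` by a sequence of edge contractions: there is a surjection
from `V(G)` onto `V(H)` with connected fibers inducing the adjacency of `H`. -/
def IsContraction {W V : Type*} (H : SimpleGraph W) (G : SimpleGraph V) : Prop :=
  ∃ f : V → W, Function.Surjective f ∧
    (∀ w : W, (G.induce (f ⁻¹' {w})).Connected) ∧
    (∀ x y : W, H.Adj x y ↔ x ≠ y ∧ ∃ u v : V, f u = x ∧ f v = y ∧ G.Adj u v)

/-- `G` is an interval graph: the intersection graph of a family of real intervals. -/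
def IsIntervalGraph {V : Type*} (G : SimpleGraph V) : Prop :=
  ∃ l r : V → ℝ, (∀ v, l v ≤ r v) ∧
    ∀ u v : V, G.Adj u v ↔ u ≠ v ∧ max (l u) (l v) ≤ min (r u) (r v)

/-- The internal vertices of a walk: vertices of the walk distinct from its two endpoints. -/
def WalkInternal {V : Type*} {G : SimpleGraph V} {x y : V} (p : G.Walk x y) : Set V :=
  {w | w ∈ p.support ∧ w ≠ x ∧ w ≠ y}

/-- `H` is a topological minor of `G`: there are branch vertices `φ u` for `u ∈ V(H)` and
internally disjoint paths of `G` joining them, one for each edge of `H`. -/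
def IsTopMinor {W V : Type*} (H : SimpleGraph W) (G : SimpleGraph V) : Prop :=
  ∃ (φ : W ↪ V) (P : ∀ ⦃u v : W⦄, H.Adj u v → G.Walk (φ u) (φ v)),
    (∀ ⦃u v⦄ (h : H.Adj u v), (P h).IsPath) ∧
    (∀ ⦃u v⦄ (h : H.Adj u v), P h.symm = (P h).reverse) ∧
    (∀ ⦃u v⦄ (h : H.Adj u v), ∀ w ∈ WalkInternal (P h), w ∉ Set.range φ) ∧
    (∀ ⦃u v u' v'⦄ (h : H.Adj u v) (h' : H.Adj u' v'), s(u, v) ≠ s(u', v') →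
      ∀ w ∈ WalkInternal (P h), w ∉ WalkInternal (P h'))

/-- `H` is (an isomorphic copy of) a subgraph of `G`. -/
def ContainsSubgraphCopy {A B : Type*} (H : SimpleGraph A) (G : SimpleGraph B) : Prop :=
  ∃ f : A ↪ B, ∀ u v : A, H.Adj u v → G.Adj (f u) (f v)

/-- `G` is `k`-degenerate: every (induced) subgraph has a vertex of degree at most `k`. -/
def Degenerate {V : Type*} (G : SimpleGraph V) (k : ℕ) : Prop :=
  ∀ s : Set V, s.Nonempty → ∃ v ∈ s, {w | w ∈ s ∧ G.Adj v w}.ncard ≤ k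

/-- The cycle on `ZMod m` (for `m ≥ 3` this is the cycle graph on `m` vertices). -/
def ringGraph (m : ℕ) : SimpleGraph (ZMod m) :=
  SimpleGraph.fromRel (fun i j => j = i + 1)

/-- Cliquewidth expressions with labels in `Fin k`. -/
inductive CWExpr (k : ℕ) where
  | vertex (l : Fin k) : CWExpr k
  | union (e₁ e₂ : CWExpr k) : CWExpr k
  | addEdges (i j : Fin k) (hij : i ≠ j) (e : CWExpr k) : CWExpr k
  | relabel (f : Fin k → Fin k) (e : CWExpr k) : CWExpr k

namespace CWExpr

variable {k : ℕ}

/-- The vertex set of the graph described by a cliquewidth expression. -/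
def verts : CWExpr k → Type
  | vertex _ => Unit
  | union e₁ e₂ => e₁.verts ⊕ e₂.verts
  | addEdges _ _ _ e => e.verts
  | relabel _ e => e.verts

/-- The labelling of the vertices described by a cliquewidth expression. -/
def label : (e : CWExpr k) → e.verts → Fin k
  | vertex l, _ => l
  | union e₁ _, Sum.inl x => e₁.label x
  | union _ e₂, Sum.inr x => e₂.label x
  | addEdges _ _ _ e, x => e.label x
  | relabel f e, x => f (e.label x)

/-- The adjacency relation described by a cliquewidth expression. -/
def adj : (e : CWExpr k) → e.verts → e.verts → Prop
  | vertex _, _, _ => False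
  | union e₁ _, Sum.inl x, Sum.inl y => e₁.adj x y
  | union _ e₂, Sum.inr x, Sum.inr y => e₂.adj x y
  | union _ _, _, _ => False
  | addEdges i j _ e, x, y =>
      e.adj x y ∨ (e.label x = i ∧ e.label y = j) ∨ (e.label x = j ∧ e.label y = i)
  | relabel _ e, x, y => e.adj x y

/-- The graph described by a cliquewidth expression. -/
def graph (e : CWExpr k) : SimpleGraph e.verts := SimpleGraph.fromRel e.adj

end CWExpr

/-- `G` has cliquewidth at most `k`: it is isomorphic to the graph of a cliquewidth
expression with at most `k` labels. -/
def CliquewidthLE {V : Type*} (G : SimpleGraph V) (k : ℕ) : Prop :=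
  ∃ e : CWExpr k, Nonempty (G ≃g e.graph)

/-- `G` has `(k, Δ)`-almost bounded degree: removing at most `k` vertices yields a graph of
maximum degree at most `Δ`. -/
def AlmostBoundedDegree {V : Type*} (G : SimpleGraph V) (k Δ : ℕ) : Prop :=
  ∃ X : Set V, X.ncard ≤ k ∧ ∀ v ∉ X, {w | w ∉ X ∧ G.Adj v w}.ncard ≤ Δ

/-- An embedding scheme for `H`: a rotation system (a permutation of the darts that is,
around each vertex, a single cycle on the darts leaving that vertex) together with a
signature on the edges. -/
structure EmbScheme {W : Type*} (H : SimpleGraph W) where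
  rot : Equiv.Perm H.Dart
  rot_fst : ∀ d : H.Dart, (rot d).fst = d.fst
  rot_cyclic : ∀ d d' : H.Dart, d.fst = d'.fst → ∃ n : ℕ, (rot ^ n) d = d'
  sign : Sym2 W → Bool

namespace EmbScheme

variable {W : Type*} {H : SimpleGraph W}

/-- The face-tracing step of an embedding scheme, acting on darts with a direction. -/
def faceStep (S : EmbScheme H) : H.Dart × Bool → H.Dart × Bool :=
  fun p =>
    let s' := xor p.2 (S.sign p.1.edge)
    ((if s' then S.rot.symm p.1.symm else S.rot p.1.symm), s')

/-- The number of orbits of a function. -/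
noncomputable def orbitCount {α : Type*} (f : α → α) : ℕ :=
  Nat.card (Quotient (Relation.EqvGen.setoid (fun x y => f x = y)))

/-- The scheme describes an embedding of `H` in a surface of Euler genus at most `g`.
Isolated vertices each bound one face; every other face is traced twice by `faceStep`,
so the number of faces is `orbitCount (faceStep) / 2` plus the number of isolated
vertices, and the Euler genus of the embedding is `2c - |V| + |E| - F`. -/
def GenusLE (S : EmbScheme H) (g : ℕ) : Prop :=
  2 * Nat.card H.ConnectedComponent + Nat.card H.edgeSet ≤
    g + Nat.card W +
      (orbitCount S.faceStep / 2 + Nat.card {v : W | ∀ w, ¬ H.Adj v w})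

/-- The cycle `e 0, e 1, …, e (m-1)` is a facial cycle of the embedding scheme `S`:
its consecutive darts are consecutive in a face traversal. -/
def IsFacialCycle (S : EmbScheme H) {m : ℕ} (e : ZMod m → W)
    (hadj : ∀ x : ZMod m, H.Adj (e x) (e (x + 1))) : Prop :=
  ∃ b : ZMod m → Bool, ∀ x : ZMod m,
    S.faceStep (⟨(e x, e (x + 1)), hadj x⟩, b x) =
      (⟨(e (x + 1), e (x + 1 + 1)), hadj (x + 1)⟩, b (x + 1))

end EmbScheme

/-- `Hs` has a `C`-vortex of width less than `k`, where `C` is the cycle of `G₀` given by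
`e`: the vertices common to `Hs` and `G₀` are exactly those of `C`, and `Hs` has a cycle
representation over `C` in which the model of each vertex of `C` contains that vertex and
every bag has at most `k` vertices. -/
def IsVortex {V : Type*} {G : SimpleGraph V} (Hs G₀ : G.Subgraph) {m : ℕ}
    (e : ZMod m → G₀.verts) (k : ℕ) : Prop :=
  Hs.verts ∩ G₀.verts = Subtype.val '' Set.range e ∧
  ∃ model : Hs.verts → Set (ZMod m),
    (∀ v, ((ringGraph m).induce (model v)).Connected) ∧
    (∀ (x : ZMod m) (v : Hs.verts), (e x : V) = (v : V) → x ∈ model v) ∧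
    (∀ ⦃u v⦄, Hs.coe.Adj u v → (model u ∩ model v).Nonempty) ∧
    (∀ t : ZMod m, {v : Hs.verts | t ∈ model v}.ncard ≤ k)

/-- `G` is `(g, p, a, k)`-almost-embeddable. -/
def AlmostEmbeddable {V : Type*} (G : SimpleGraph V) (g p a k : ℕ) : Prop :=
  ∃ A : Set V, A.ncard ≤ a ∧
  ∃ s : ℕ, s ≤ p ∧
  ∃ (G₀ : G.Subgraph) (Gv : Fin s → G.Subgraph),
    (G₀ ⊔ ⨆ i, Gv i) = (⊤ : G.Subgraph).deleteVerts A ∧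
    (∀ i j, i ≠ j → Disjoint (Gv i).verts (Gv j).verts) ∧
    ∃ S : EmbScheme G₀.coe, S.GenusLE g ∧
    ∃ (m : Fin s → ℕ) (e : ∀ i, ZMod (m i) → G₀.verts)
      (hadj : ∀ i x, G₀.coe.Adj (e i x) (e i (x + 1))),
      (∀ i, 3 ≤ m i) ∧
      (∀ i, Function.Injective (e i)) ∧
      (∀ i, S.IsFacialCycle (e i) (hadj i)) ∧
      (∀ i j, i ≠ j → Disjoint (Set.range (e i)) (Set.range (e j))) ∧
      (∀ i, IsVortex (Gv i) G₀ (e i) k)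

section Aux

variable {V : Type} {G : SimpleGraph V}

/-- A walk from the start of `p` to `p.getVert i` of length ≤ i. -/
lemma aux_walkTo {u v : V} (p : G.Walk u v) (i : ℕ) :
    ∃ q : G.Walk u (p.getVert i), q.length ≤ i := by
  induction p generalizing i with
  | nil => exact ⟨SimpleGraph.Walk.nil, by simp [SimpleGraph.Walk.getVert]⟩
  | cons h p ih =>
    cases i with
    | zero => exact ⟨SimpleGraph.Walk.nil, by simp [SimpleGraph.Walk.getVert]⟩
    | succ i =>
      obtain ⟨q, hq⟩ := ih i
      exact ⟨SimpleGraph.Walk.cons h q, by simpa using hq⟩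

/-- A walk from `p.getVert i` to the end of `p` of length ≤ p.length - i. -/
lemma aux_walkFrom {u v : V} (p : G.Walk u v) (i : ℕ) :
    ∃ q : G.Walk (p.getVert i) v, q.length ≤ p.length - i := by
  induction p generalizing i with
  | nil => exact ⟨SimpleGraph.Walk.nil, by simp⟩
  | cons h p ih =>
    cases i with
    | zero => exact ⟨SimpleGraph.Walk.cons h p, (Nat.sub_zero _).symm.le⟩
    | succ i =>
      obtain ⟨q, hq⟩ := ih i
      exact ⟨q, by simpa using hq⟩

lemma aux_dist_getVert {u v : V} (p : G.Walk u v) (hp : p.length = G.dist u v)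
    {i : ℕ} (hi : i ≤ p.length) : G.dist u (p.getVert i) = i := by
  obtain ⟨q, hq⟩ := aux_walkTo p i
  have h1 : G.dist u (p.getVert i) ≤ i := le_trans (SimpleGraph.dist_le q) hq
  refine le_antisymm h1 ?_
  by_contra hlt
  push_neg at hlt
  obtain ⟨r, hr⟩ := (SimpleGraph.Walk.reachable q).exists_walk_length_eq_dist
  obtain ⟨s, hs⟩ := aux_walkFrom p i
  have := SimpleGraph.dist_le (r.append s)
  rw [SimpleGraph.Walk.length_append, hr] at this
  omega


variable {V : Type} {G : SimpleGraph V}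

lemma aux_ball_step {r : ℕ} {u x : V} (q : G.Walk u x) (hq : q.length ≤ r + 1) :
    (∃ q' : G.Walk u x, q'.length ≤ r) ∨
      ∃ y, (∃ q' : G.Walk u y, q'.length ≤ r) ∧ G.Adj y x := by
  induction q generalizing r with
  | nil => exact Or.inl ⟨SimpleGraph.Walk.nil, by simp⟩
  | @cons u z x h p ih =>
    simp only [SimpleGraph.Walk.length_cons] at hq
    cases r with
    | zero =>
      have h0 : p.length = 0 := by omega
      have hz : z = x := p.eq_of_length_eq_zero h0
      subst hz
      exact Or.inr ⟨u, ⟨SimpleGraph.Walk.nil, by simp⟩, h⟩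
    | succ r' =>
      rcases ih (r := r') (by omega) with ⟨q', hq'⟩ | ⟨y, ⟨q', hq'⟩, hadj⟩
      · refine Or.inl ⟨SimpleGraph.Walk.cons h q', ?_⟩
        simp only [SimpleGraph.Walk.length_cons]; omega
      · refine Or.inr ⟨y, ⟨SimpleGraph.Walk.cons h q', ?_⟩, hadj⟩
        simp only [SimpleGraph.Walk.length_cons]; omega

/-- ball of radius `r` around `u` -/
lemma aux_ball_card [Fintype V] {Δ : ℕ} (hdeg : ∀ v : V, {w | G.Adj v w}.ncard ≤ Δ)
    (u : V) (r : ℕ) :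
    {w : V | ∃ q : G.Walk u w, q.length ≤ r}.ncard ≤ (Δ + 1) ^ r := by
  induction r with
  | zero =>
    have hsub : {w : V | ∃ q : G.Walk u w, q.length ≤ 0} ⊆ {u} := by
      rintro w ⟨q, hq⟩
      exact Set.mem_singleton_iff.2 (q.eq_of_length_eq_zero (by omega)).symm
    simpa using Set.ncard_le_ncard hsub (Set.finite_singleton u)
  | succ r ih =>
    classical
    set B : Set V := {w : V | ∃ q : G.Walk u w, q.length ≤ r} with hB
    have hBfin : B.Finite := Set.toFinite _
    set s : Finset V := hBfin.toFinset with hs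
    set t : Finset V := s.biUnion (fun y => (Set.toFinite (insert y {x | G.Adj y x})).toFinset)
      with ht
    have hsub : {w : V | ∃ q : G.Walk u w, q.length ≤ r + 1} ⊆ ↑t := by
      rintro x ⟨q, hq⟩
      rcases aux_ball_step q hq with ⟨q', hq'⟩ | ⟨y, ⟨q', hq'⟩, hadj⟩
      · refine Finset.mem_coe.2 (Finset.mem_biUnion.2 ⟨x, hBfin.mem_toFinset.2 ⟨q', hq'⟩, ?_⟩)
        exact (Set.Finite.mem_toFinset _).2 (Set.mem_insert _ _)
      · refine Finset.mem_coe.2 (Finset.mem_biUnion.2 ⟨y, hBfin.mem_toFinset.2 ⟨q', hq'⟩, ?_⟩)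
        exact (Set.Finite.mem_toFinset _).2 (Set.mem_insert_of_mem _ hadj)
    have h1 : {w : V | ∃ q : G.Walk u w, q.length ≤ r + 1}.ncard ≤ t.card := by
      have := Set.ncard_le_ncard hsub (Set.toFinite _)
      simpa using this
    have h2 : t.card ≤ s.card * (Δ + 1) := by
      calc t.card ≤ ∑ y ∈ s, ((Set.toFinite (insert y {x | G.Adj y x})).toFinset).card :=
            Finset.card_biUnion_le
        _ ≤ ∑ _y ∈ s, (Δ + 1) := by
            refine Finset.sum_le_sum fun y _ => ?_
            have hcard : ((Set.toFinite (insert y {x | G.Adj y x})).toFinset).card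
                = (insert y {x | G.Adj y x}).ncard :=
              (Set.ncard_eq_toFinset_card _ _).symm
            rw [hcard]
            calc (insert y {x | G.Adj y x}).ncard ≤ {x | G.Adj y x}.ncard + 1 :=
                  Set.ncard_insert_le _ _
              _ ≤ Δ + 1 := by have := hdeg y; omega
        _ = s.card * (Δ + 1) := by simp [Finset.sum_const, Nat.smul_one_eq_cast]
    have h3 : s.card = B.ncard := (Set.ncard_eq_toFinset_card _ hBfin).symm
    calc {w : V | ∃ q : G.Walk u w, q.length ≤ r + 1}.ncard ≤ t.card := h1
      _ ≤ s.card * (Δ + 1) := h2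
      _ ≤ (Δ + 1) ^ r * (Δ + 1) := by
          rw [h3]; exact Nat.mul_le_mul_right _ ih
      _ = (Δ + 1) ^ (r + 1) := by ring


variable {V : Type}

lemma aux_key [Fintype V] (G H : SimpleGraph V) (X : Set V) {Δ : ℕ}
    (hsub : ∀ ⦃x y⦄, H.Adj x y → G.Adj x y)
    (hind : ∀ ⦃x y⦄, G.Adj x y → x ∉ X → y ∉ X → H.Adj x y)
    (hXfree : ∀ ⦃x y⦄, H.Adj x y → x ∉ X)
    (hdeg : ∀ v : V, {w | H.Adj v w}.ncard ≤ Δ)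
    {a b : V} (q : H.Walk a b) (hq : q.IsPath) :
    ∃ D : ℕ, q.length + 1 ≤ (Δ + 1) ^ D ∧ Nonempty (pathGraph (D + 1) ↪g G) := by
  classical
  -- the maximum distance from `a` to a vertex of `q`
  set D : ℕ := q.support.toFinset.sup (fun w => H.dist a w) with hD
  refine ⟨D, ?_, ?_⟩
  · -- cardinality bound: the support is inside the ball of radius D
    have hsupp : {w : V | w ∈ q.support} ⊆ {w : V | ∃ p : H.Walk a w, p.length ≤ D} := by
      intro w hw
      have hreach : H.Reachable a w := ⟨q.takeUntil w hw⟩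
      obtain ⟨p, hp⟩ := hreach.exists_walk_length_eq_dist
      refine ⟨p, ?_⟩
      rw [hp]
      exact Finset.le_sup (List.mem_toFinset.2 hw)
    have h1 : {w : V | w ∈ q.support}.ncard = q.length + 1 := by
      have : {w : V | w ∈ q.support} = ↑q.support.toFinset := by ext w; simp
      rw [this, Set.ncard_coe_finset, List.toFinset_card_of_nodup hq.support_nodup,
        SimpleGraph.Walk.length_support]
    calc q.length + 1 = {w : V | w ∈ q.support}.ncard := h1.symm
      _ ≤ {w : V | ∃ p : H.Walk a w, p.length ≤ D}.ncard :=
          Set.ncard_le_ncard hsupp (Set.toFinite _)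
      _ ≤ (Δ + 1) ^ D := aux_ball_card hdeg a D
  · -- the induced path: a geodesic from `a` to a farthest vertex
    obtain ⟨w₀, hw₀mem, hw₀⟩ := Finset.exists_mem_eq_sup q.support.toFinset
      ⟨a, List.mem_toFinset.2 q.start_mem_support⟩ (fun w => H.dist a w)
    have hreach : H.Reachable a w₀ := ⟨q.takeUntil w₀ (List.mem_toFinset.1 hw₀mem)⟩
    obtain ⟨p, hp⟩ := hreach.exists_walk_length_eq_dist
    have hplen : p.length = D := by rw [hp, ← hw₀]
    have hdist : ∀ i : ℕ, i ≤ p.length → H.dist a (p.getVert i) = i :=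
      fun i hi => aux_dist_getVert p hp hi
    -- vertices of the geodesic avoid X (needed when D ≥ 1)
    have hnotX : 1 ≤ D → ∀ i : ℕ, i ≤ D → p.getVert i ∉ X := by
      intro hD1 i hi
      rcases lt_or_eq_of_le hi with hlt | heq
      · exact hXfree (p.adj_getVert_succ (by omega))
      · subst heq
        have hadj := p.adj_getVert_succ (i := D - 1) (by omega)
        have : D - 1 + 1 = D := by omega
        rw [this] at hadj
        exact hXfree hadj.symm
    have hinj : Function.Injective (fun i : Fin (D + 1) => p.getVert i) := by
      intro i j hij
      have h1 := hdist i (by omega)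
      have h2 := hdist j (by omega)
      simp only at hij
      rw [hij, h2] at h1
      exact (Fin.ext h1).symm
    refine ⟨⟨⟨fun i : Fin (D + 1) => p.getVert i, hinj⟩, ?_⟩⟩
    intro i j
    simp only [Function.Embedding.coeFn_mk]
    constructor
    · -- G.Adj → pathGraph.Adj
      intro hadj
      have hij : (i : ℕ) ≠ (j : ℕ) := by
        intro h
        have : (i : Fin (D + 1)) = j := Fin.ext h
        subst this
        exact G.irrefl hadj
      have hD1 : 1 ≤ D := by
        by_contra h
        have hD0 : D = 0 := by omega
        have : (i : ℕ) = 0 := by omega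
        have : (j : ℕ) = 0 := by omega
        omega
      have hiX : p.getVert i ∉ X := hnotX hD1 i (by omega)
      have hjX : p.getVert j ∉ X := hnotX hD1 j (by omega)
      have hH : H.Adj (p.getVert i) (p.getVert j) := hind hadj hiX hjX
      -- distances differ by at most one
      have key : ∀ s t : ℕ, s ≤ p.length → t ≤ p.length →
          H.Adj (p.getVert s) (p.getVert t) → t ≤ s + 1 := by
        intro s t hs ht hadj'
        obtain ⟨r, hr⟩ := aux_walkTo p s
        have := SimpleGraph.dist_le (r.concat hadj')
        rw [SimpleGraph.Walk.length_concat, hdist t ht] at this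
        omega
      have h1 : (j : ℕ) ≤ (i : ℕ) + 1 := key i j (by omega) (by omega) hH
      have h2 : (i : ℕ) ≤ (j : ℕ) + 1 := key j i (by omega) (by omega) hH.symm
      rw [SimpleGraph.pathGraph_adj]
      omega
    · -- pathGraph.Adj → G.Adj
      intro hadj
      rw [SimpleGraph.pathGraph_adj] at hadj
      rcases hadj with h | h
      · have := p.adj_getVert_succ (i := i) (by omega)
        rw [show (i : ℕ) + 1 = (j : ℕ) from h] at this
        exact hsub this
      · have := p.adj_getVert_succ (i := j) (by omega)
        rw [show (j : ℕ) + 1 = (i : ℕ) from h] at this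
        exact hsub this.symm

variable {G : SimpleGraph V} {X : Set V}

/-- length (in vertices) of the maximal `X`-free prefix of a walk -/
def gpLen (X : Set V) [DecidablePred (· ∈ X)] : ∀ {u v : V}, G.Walk u v → ℕ
  | u, _, .nil => if u ∈ X then 0 else 1
  | u, _, .cons _ p => if u ∈ X then 0 else gpLen X p + 1

lemma gpLen_nil [DecidablePred (· ∈ X)] {u : V} :
    gpLen X (SimpleGraph.Walk.nil : G.Walk u u) = if u ∈ X then 0 else 1 := rfl

lemma gpLen_cons [DecidablePred (· ∈ X)] {u w v : V} (h : G.Adj u w) (p : G.Walk w v) :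
    gpLen X (SimpleGraph.Walk.cons h p) = if u ∈ X then 0 else gpLen X p + 1 := rfl

/-- the maximal `X`-free prefix is a genuine `X`-free path -/
lemma gp_path [DecidablePred (· ∈ X)] : ∀ {u v : V} (p : G.Walk u v), p.IsPath →
    gpLen X p ≠ 0 →
    ∃ (a : V) (q : G.Walk u a), q.IsPath ∧ (∀ w ∈ q.support, w ∉ X) ∧
      (∀ w ∈ q.support, w ∈ p.support) ∧ q.length + 1 = gpLen X p := by
  intro u v p
  induction p with
  | nil =>
    rename_i u'
    intro _ h0
    rw [gpLen_nil] at h0 ⊢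
    by_cases hu : u' ∈ X
    · simp [hu] at h0
    · refine ⟨u', SimpleGraph.Walk.nil, SimpleGraph.Walk.IsPath.nil, ?_, ?_, by simp [hu]⟩
      · intro w hw; simp at hw; subst hw; exact hu
      · intro w hw; exact hw
  | @cons u w v h p ih =>
    intro hp h0
    rw [gpLen_cons] at h0 ⊢
    by_cases hu : u ∈ X
    · simp [hu] at h0
    · simp only [hu, if_false] at h0 ⊢
      by_cases hz : gpLen X p = 0
      · refine ⟨u, SimpleGraph.Walk.nil, SimpleGraph.Walk.IsPath.nil, ?_, ?_, by simp [hz]⟩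
        · intro w' hw'; simp at hw'; subst hw'; exact hu
        · intro w' hw'; simp at hw'; subst hw'; simp
      · obtain ⟨a, q, hq, hgood, hsup, hlen⟩ := ih hp.of_cons hz
        refine ⟨a, SimpleGraph.Walk.cons h q, ?_, ?_, ?_, by simp [hlen]⟩
        · rw [SimpleGraph.Walk.cons_isPath_iff]
          exact ⟨hq, fun hus => ((SimpleGraph.Walk.cons_isPath_iff h p).1 hp).2 (hsup u hus)⟩
        · intro w' hw'
          rw [SimpleGraph.Walk.support_cons, List.mem_cons] at hw'
          rcases hw' with rfl | hw'
          · exact hu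
          · exact hgood w' hw'
        · intro w' hw'
          rw [SimpleGraph.Walk.support_cons, List.mem_cons] at hw' ⊢
          rcases hw' with rfl | hw'
          · exact Or.inl rfl
          · exact Or.inr (hsup w' hw')

/-- the number of vertices of the walk lying in `X` -/
def badCount (X : Set V) [DecidablePred (· ∈ X)] {u v : V} (p : G.Walk u v) : ℕ :=
  p.support.countP (fun w => decide (w ∈ X))

lemma pigeon [DecidablePred (· ∈ X)] : ∀ {u v : V} (p : G.Walk u v), p.IsPath →
    ∃ m : ℕ, gpLen X p ≤ m ∧
      p.length + 1 ≤ badCount X p * m + badCount X p + gpLen X p ∧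
      (m = 0 ∨ ∃ (a b : V) (q : G.Walk a b), q.IsPath ∧ (∀ w ∈ q.support, w ∉ X) ∧
        m ≤ q.length + 1) := by
  intro u v p
  induction p with
  | nil =>
    rename_i u'
    intro _
    by_cases hu : u' ∈ X
    · refine ⟨0, ?_, ?_, Or.inl rfl⟩ <;>
        simp [gpLen_nil, badCount, hu, SimpleGraph.Walk.support_nil]
    · refine ⟨1, ?_, ?_, Or.inr ⟨u', u', SimpleGraph.Walk.nil, SimpleGraph.Walk.IsPath.nil,
        ?_, by simp⟩⟩
      · simp [gpLen_nil, hu]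
      · simp [gpLen_nil, badCount, hu, SimpleGraph.Walk.support_nil]
      · intro w hw; simp at hw; subst hw; exact hu
  | @cons u w v h p ih =>
    intro hp
    obtain ⟨m', hgp', hbound', hgood'⟩ := ih hp.of_cons
    have hbc : badCount X (SimpleGraph.Walk.cons h p)
        = badCount X p + (if u ∈ X then 1 else 0) := by
      simp only [badCount, SimpleGraph.Walk.support_cons, List.countP_cons]
      by_cases hu : u ∈ X <;> simp [hu] <;> omega
    by_cases hu : u ∈ X
    · refine ⟨m', by simp [gpLen_cons, hu], ?_, hgood'⟩
      rw [hbc, gpLen_cons]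
      simp only [hu, if_true, SimpleGraph.Walk.length_cons]
      have hmul : (badCount X p + 1) * m' = badCount X p * m' + m' := by ring
      omega
    · -- u ∉ X
      refine ⟨max m' (gpLen X p + 1), ?_, ?_, ?_⟩
      · rw [gpLen_cons]; simp [hu]
      · rw [hbc, gpLen_cons]
        simp only [hu, if_false, SimpleGraph.Walk.length_cons, Nat.add_zero]
        have hmono : badCount X p * m' ≤ badCount X p * max m' (gpLen X p + 1) :=
          Nat.mul_le_mul_left _ (le_max_left _ _)
        omega
      · right
        rcases le_or_gt (gpLen X p + 1) m' with hle | hlt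
        · rw [max_eq_left hle]
          rcases hgood' with rfl | hg
          · omega
          · exact hg
        · rw [max_eq_right (by omega)]
          have hne : gpLen X (SimpleGraph.Walk.cons h p) ≠ 0 := by
            rw [gpLen_cons]; simp [hu]
          obtain ⟨a, q, hq, hgood, _, hlen⟩ := gp_path _ hp hne
          refine ⟨u, a, q, hq, hgood, ?_⟩
          rw [hlen, gpLen_cons]; simp [hu]

/-- the number of bad vertices on a path is at most `X.ncard` -/
lemma badCount_le [Fintype V] [DecidablePred (· ∈ X)] {u v : V} (p : G.Walk u v)
    (hp : p.IsPath) : badCount X p ≤ X.ncard := by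
  classical
  have h1 : badCount X p = (p.support.filter (fun w => decide (w ∈ X))).length := by
    simp [badCount, List.countP_eq_length_filter]
  have hnd : (p.support.filter (fun w => decide (w ∈ X))).Nodup :=
    hp.support_nodup.filter _
  have h2 : ((p.support.filter (fun w => decide (w ∈ X))).toFinset : Set V) ⊆ X := by
    intro x hx
    simp only [Finset.mem_coe, List.mem_toFinset, List.mem_filter] at hx
    exact of_decide_eq_true hx.2
  have h3 := Set.ncard_le_ncard h2 (Set.toFinite X)
  rw [Set.ncard_coe_finset, List.toFinset_card_of_nodup hnd] at h3
  omega

/-- `G` with all edges meeting `X` removed. -/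
def offGraph {V : Type} (G : SimpleGraph V) (X : Set V) : SimpleGraph V where
  Adj a b := a ∉ X ∧ b ∉ X ∧ G.Adj a b
  symm := ⟨fun a b h => ⟨h.2.1, h.1, h.2.2.symm⟩⟩
  loopless := ⟨fun a h => G.irrefl h.2.2⟩


end Aux

theorem stmt9 (Δ k : ℕ) (hΔ : 0 < Δ) (hk : 0 < k) :
    ∃ c : ℝ, 0 < c ∧
      ∀ {V : Type} [Fintype V] (G : SimpleGraph V) (n : ℕ),
        AlmostBoundedDegree G k Δ → HasPathOfOrder G n →
        HasInducedPathGE G (c * Real.logb 2 n) := by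

  have hlogΔ : 0 < Real.logb 2 ((Δ : ℝ) + 1) := by
    apply Real.logb_pos (by norm_num)
    have : (1 : ℝ) ≤ (Δ : ℝ) := by exact_mod_cast hΔ
    linarith
  have hlogK : 0 < Real.logb 2 (4 * ((k : ℝ) + 1) ^ 2) := by
    apply Real.logb_pos (by norm_num)
    have : (0 : ℝ) ≤ (k : ℝ) := Nat.cast_nonneg k
    nlinarith
  refine ⟨min ((2 * Real.logb 2 ((Δ : ℝ) + 1))⁻¹) ((Real.logb 2 (4 * ((k : ℝ) + 1) ^ 2))⁻¹),
    lt_min (by positivity) (by positivity), ?_⟩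
  set c : ℝ := min ((2 * Real.logb 2 ((Δ : ℝ) + 1))⁻¹) ((Real.logb 2 (4 * ((k : ℝ) + 1) ^ 2))⁻¹)
    with hc
  have hc0 : 0 < c := lt_min (by positivity) (by positivity)
  intro V _ G n habd hpath
  classical
  obtain ⟨X, hXcard, hXdeg⟩ := habd
  obtain ⟨u, v, p, hp, hplen⟩ := hpath
  have hn1 : 1 ≤ n := by omega
  have hnR : (1 : ℝ) ≤ (n : ℝ) := by exact_mod_cast hn1
  have hlogn : 0 ≤ Real.logb 2 (n : ℝ) := Real.logb_nonneg (by norm_num) hnR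
  by_cases hbig : 4 * (k + 1) ^ 2 ≤ n
  · -- main case
    obtain ⟨m, hgp, hbound, hgood⟩ := pigeon (X := X) p hp
    have hB : badCount X p ≤ k := le_trans (badCount_le p hp) hXcard
    have hnm : n ≤ (k + 1) * m + k := by
      have h1 : badCount X p * m ≤ k * m := Nat.mul_le_mul_right _ hB
      have h2 : (k + 1) * m = k * m + m := by ring
      omega
    have hm1 : 1 ≤ m := by
      rcases Nat.eq_zero_or_pos m with rfl | h
      · exfalso; nlinarith [hnm, hbig]
      · exact h
    obtain ⟨a, b, q, hq, hqX, hqm⟩ := hgood.resolve_left (by omega)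
    -- transfer q to offGraph G X
    have hedges : ∀ e ∈ q.edges, e ∈ (offGraph G X).edgeSet := by
      intro e he
      induction e with
      | h x y =>
        exact ⟨hqX x (q.fst_mem_support_of_mem_edges he),
          hqX y (q.snd_mem_support_of_mem_edges he), q.adj_of_mem_edges he⟩
    set q' : (offGraph G X).Walk a b := q.transfer (offGraph G X) hedges with hq'def
    have hq'path : q'.IsPath := hq.transfer hedges
    have hq'len : q'.length = q.length := q.length_transfer hedges
    have hdeg : ∀ v : V, {w | (offGraph G X).Adj v w}.ncard ≤ Δ := by
      intro v
      by_cases hv : v ∈ X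
      · have : {w | (offGraph G X).Adj v w} = ∅ := by
          ext w; simp only [Set.mem_setOf_eq, Set.mem_empty_iff_false, iff_false]
          rintro ⟨h1, _, _⟩; exact h1 hv
        simp [this]
      · have : {w | (offGraph G X).Adj v w} = {w | w ∉ X ∧ G.Adj v w} := by
          ext w; constructor
          · rintro ⟨_, h2, h3⟩; exact ⟨h2, h3⟩
          · rintro ⟨h2, h3⟩; exact ⟨hv, h2, h3⟩
        rw [this]; exact hXdeg v hv
    obtain ⟨D, hDcard, hemb⟩ := aux_key G (offGraph G X) X
      (fun x y h => h.2.2) (fun x y h hx hy => ⟨hx, hy, h⟩) (fun x y h => h.1)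
      hdeg q' hq'path
    refine ⟨D + 1, ?_, hemb⟩
    -- arithmetic
    have hmD : m ≤ (Δ + 1) ^ D := by
      have : q.length + 1 ≤ (Δ + 1) ^ D := by rw [← hq'len]; exact hDcard
      omega
    have hK0 : (0 : ℝ) ≤ (k : ℝ) := Nat.cast_nonneg k
    have hM1 : (1 : ℝ) ≤ (m : ℝ) := by exact_mod_cast hm1
    have hNK : (n : ℝ) ≤ ((k : ℝ) + 1) * (m : ℝ) + (k : ℝ) := by exact_mod_cast hnm
    have hNbig : 4 * ((k : ℝ) + 1) ^ 2 ≤ (n : ℝ) := by exact_mod_cast hbig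
    set N : ℝ := (n : ℝ) with hN
    set M : ℝ := (m : ℝ) with hM
    set K : ℝ := (k : ℝ) with hK
    have hMsq : N ≤ M ^ 2 := by nlinarith [sq_nonneg (N - K), sq_nonneg K, sq_nonneg M]
    have hMpow : M ≤ ((Δ : ℝ) + 1) ^ D := by
      rw [hM]
      calc (m : ℝ) ≤ ((Δ + 1 : ℕ) ^ D : ℕ) := by exact_mod_cast hmD
        _ = ((Δ : ℝ) + 1) ^ D := by push_cast; ring
    have hM0 : 0 < M := by linarith
    have hN0 : 0 < N := by linarith
    have hlog1 : Real.logb 2 N ≤ 2 * Real.logb 2 M := by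
      calc Real.logb 2 N ≤ Real.logb 2 (M ^ 2) :=
            Real.logb_le_logb_of_le (by norm_num) hN0 hMsq
        _ = 2 * Real.logb 2 M := by rw [Real.logb_pow]; norm_num
    have hlog2 : Real.logb 2 M ≤ (D : ℝ) * Real.logb 2 ((Δ : ℝ) + 1) := by
      calc Real.logb 2 M ≤ Real.logb 2 (((Δ : ℝ) + 1) ^ D) :=
            Real.logb_le_logb_of_le (by norm_num) hM0 hMpow
        _ = (D : ℝ) * Real.logb 2 ((Δ : ℝ) + 1) := Real.logb_pow _ _ _
    have hfinal : c * Real.logb 2 N ≤ (D : ℝ) := by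
      have h1 : c * Real.logb 2 N ≤ (2 * Real.logb 2 ((Δ : ℝ) + 1))⁻¹ * Real.logb 2 N :=
        mul_le_mul_of_nonneg_right (min_le_left _ _) hlogn
      have h2 : Real.logb 2 N ≤ 2 * ((D : ℝ) * Real.logb 2 ((Δ : ℝ) + 1)) := by nlinarith
      have h3 : (2 * Real.logb 2 ((Δ : ℝ) + 1))⁻¹ * Real.logb 2 N
          ≤ (2 * Real.logb 2 ((Δ : ℝ) + 1))⁻¹ * (2 * ((D : ℝ) * Real.logb 2 ((Δ : ℝ) + 1))) :=
        mul_le_mul_of_nonneg_left h2 (by positivity)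
      have h4 : (2 * Real.logb 2 ((Δ : ℝ) + 1))⁻¹
          * (2 * ((D : ℝ) * Real.logb 2 ((Δ : ℝ) + 1))) = (D : ℝ) := by
        field_simp
      linarith
    push_cast
    linarith
  · -- small case: an induced path on one vertex suffices
    push_neg at hbig
    refine ⟨1, ?_, ?_⟩
    · have hle : (n : ℝ) ≤ 4 * ((k : ℝ) + 1) ^ 2 := by
        have : n ≤ 4 * (k + 1) ^ 2 := le_of_lt hbig
        exact_mod_cast this
      have h1 : Real.logb 2 (n : ℝ) ≤ Real.logb 2 (4 * ((k : ℝ) + 1) ^ 2) :=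
        Real.logb_le_logb_of_le (by norm_num) (by linarith) hle
      have h2 : c * Real.logb 2 (n : ℝ)
          ≤ (Real.logb 2 (4 * ((k : ℝ) + 1) ^ 2))⁻¹ * Real.logb 2 (4 * ((k : ℝ) + 1) ^ 2) := by
        calc c * Real.logb 2 (n : ℝ) ≤ c * Real.logb 2 (4 * ((k : ℝ) + 1) ^ 2) :=
              mul_le_mul_of_nonneg_left h1 (le_of_lt hc0)
          _ ≤ (Real.logb 2 (4 * ((k : ℝ) + 1) ^ 2))⁻¹ * Real.logb 2 (4 * ((k : ℝ) + 1) ^ 2) :=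
              mul_le_mul_of_nonneg_right (min_le_right _ _) (le_of_lt hlogK)
      rw [inv_mul_cancel₀ (ne_of_gt hlogK)] at h2
      simpa using h2
    · refine ⟨⟨⟨fun _ => u, by intro a b _; exact Subsingleton.elim a b⟩, ?_⟩⟩
      intro i j
      show G.Adj u u ↔ (pathGraph 1).Adj i j
      constructor
      · intro h; exact absurd h G.irrefl
      · intro h
        rw [SimpleGraph.pathGraph_adj] at h
        omega
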